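/- Let φ : [0,A] → [0,∞) be continuous with L := ∫₀^A φ(a) da ≥ 1, and let δ ∈ (0,A) satisfy c := ∫₀^δ φ(a) da < 1. Let x ∈ L^∞_loc([-A,∞);ℝ) satisfy x(t) = ∫₀^A φ(a) x(t-a) da for almost every t ≥ 0, with essentially bounded initial data ξ on [-A,0). Then for all t ≥ 0: min(ess inf_{[-A,0)} ξ, ((L-c)/(1-c))^{1+⌈t/h⌉} · ess inf_{[-A,0)} ξ) ≤ ess inf_{a∈[-A,0)} x(t+a) ≤ ess sup_{a∈[-A,0)} x(t+a) ≤ max(((L-c)/(1-c))^{1+⌈t/h⌉} · ess sup_{[-A,0)} ξ, ess sup_{[-A,0)} ξ), where h := min(δ, A-δ). -/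

import Mathlib

open MeasureTheory intervalIntegral Filter Set



lemma bddUnder_ae_of_image_bdd {f : ℝ → ℝ} {s : Set ℝ} (hs : MeasurableSet s)
    (hb : Bornology.IsBounded (f '' s)) :
    IsBoundedUnder (· ≤ ·) (ae (volume.restrict s)) f := by
  obtain ⟨b, hbmem⟩ := hb.bddAbove
  exact Filter.isBoundedUnder_of_eventually_le
    (by filter_upwards [ae_restrict_mem hs] with a ha using hbmem ⟨a, ha, rfl⟩)

lemma bddUnder_ae_of_image_bdd' {f : ℝ → ℝ} {s : Set ℝ} (hs : MeasurableSet s)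
    (hb : Bornology.IsBounded (f '' s)) :
    IsBoundedUnder (· ≥ ·) (ae (volume.restrict s)) f := by
  obtain ⟨b, hbmem⟩ := hb.bddBelow
  exact Filter.isBoundedUnder_of_eventually_ge
    (by filter_upwards [ae_restrict_mem hs] with a ha using hbmem ⟨a, ha, rfl⟩)

lemma ae_le_essSup_real {f : ℝ → ℝ} {μ : Measure ℝ}
    (hb : IsBoundedUnder (· ≤ ·) (ae μ) f) :
    ∀ᵐ a ∂μ, f a ≤ essSup f μ := by
  have H : ∀ n : ℕ, ∀ᵐ a ∂μ, f a < essSup f μ + 1/(n+1) := by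
    intro n
    exact eventually_lt_of_limsup_lt (lt_add_of_pos_right _ (by positivity : (0:ℝ) < 1/(n+1))) hb
  rw [← ae_all_iff] at H
  filter_upwards [H] with a ha
  refine le_of_forall_pos_le_add fun ε hε => ?_
  obtain ⟨n, hn⟩ := exists_nat_one_div_lt hε
  exact (ha n).le.trans (by linarith)

lemma essInf_ae_le_real {f : ℝ → ℝ} {μ : Measure ℝ}
    (hb : IsBoundedUnder (· ≥ ·) (ae μ) f) :
    ∀ᵐ a ∂μ, essInf f μ ≤ f a := by
  have H : ∀ n : ℕ, ∀ᵐ a ∂μ, essInf f μ - 1/(n+1) < f a := by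
    intro n
    exact eventually_lt_of_lt_liminf (sub_lt_self _ (by positivity : (0:ℝ) < 1/(n+1))) hb
  rw [← ae_all_iff] at H
  filter_upwards [H] with a ha
  refine le_of_forall_pos_le_add fun ε hε => ?_
  obtain ⟨n, hn⟩ := exists_nat_one_div_lt hε
  have := (ha n).le
  linarith

lemma essSup_le_of_ae_real {f : ℝ → ℝ} {μ : Measure ℝ} {b : ℝ}
    (hco : IsCoboundedUnder (· ≤ ·) (ae μ) f) (h : ∀ᵐ a ∂μ, f a ≤ b) :
    essSup f μ ≤ b :=
  limsup_le_of_le hco h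

lemma le_essInf_of_ae_real {f : ℝ → ℝ} {μ : Measure ℝ} {b : ℝ}
    (hco : IsCoboundedUnder (· ≥ ·) (ae μ) f) (h : ∀ᵐ a ∂μ, b ≤ f a) :
    b ≤ essInf f μ :=
  le_liminf_of_le hco h


lemma ae_comp_sub {P : ℝ → Prop} (h : ∀ᵐ s, P s) (t : ℝ) : ∀ᵐ a, P (t - a) := by
  rw [ae_iff] at h ⊢
  have he : {a | ¬P (t - a)} = (fun a => t - a) ⁻¹' {s | ¬P s} := rfl
  rw [he]
  have hmp : MeasurePreserving (fun a : ℝ => t - a) volume volume := by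
    simpa [sub_eq_add_neg, Function.comp_def] using
      (measurePreserving_add_left (volume : Measure ℝ) t).comp
        (Measure.measurePreserving_neg (volume : Measure ℝ))
  exact hmp.quasiMeasurePreserving.preimage_null h

lemma ae_comp_add {P : ℝ → Prop} (h : ∀ᵐ s, P s) (t : ℝ) : ∀ᵐ a, P (t + a) := by
  rw [ae_iff] at h ⊢
  have he : {a | ¬P (t + a)} = (fun a => t + a) ⁻¹' {s | ¬P s} := rfl
  rw [he]
  exact (measurePreserving_add_left (volume : Measure ℝ) t).quasiMeasurePreserving.preimage_null h

lemma aeRestrictIcoNeBot {a b : ℝ} (hab : a < b) :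
    (ae ((volume : Measure ℝ).restrict (Ico a b))).NeBot := by
  rw [ae_neBot]
  intro h0
  rw [Measure.restrict_eq_zero] at h0
  rw [Real.volume_Ico] at h0
  simp only [ENNReal.ofReal_eq_zero] at h0
  linarith

lemma bdd_neg_image {x : ℝ → ℝ} {s : Set ℝ} (h : Bornology.IsBounded (x '' s)) :
    Bornology.IsBounded ((fun a => -x a) '' s) := by
  rw [isBounded_iff_forall_norm_le] at h ⊢
  obtain ⟨C, hC⟩ := h
  exact ⟨C, by rintro y ⟨a, ha, rfl⟩; simpa using hC (x a) ⟨a, ha, rfl⟩⟩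

lemma key_bound (A δ : ℝ) (hA : 0 < A) (φ x : ℝ → ℝ)
    (hφc : ContinuousOn φ (Set.Icc 0 A)) (hφ0 : ∀ a ∈ Set.Icc 0 A, 0 ≤ φ a)
    (L c h : ℝ) (hL : L = ∫ a in (0:ℝ)..A, φ a) (hL1 : 1 ≤ L)
    (hδ : 0 < δ) (hδA : δ < A)
    (hc : c = ∫ a in (0:ℝ)..δ, φ a) (hc1 : c < 1)
    (hh : h = min δ (A - δ))
    (hmeas : Measurable x)
    (hloc : ∀ b : ℝ, -A ≤ b → Bornology.IsBounded (x '' Set.Icc (-A) b))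
    (M : ℝ) (hM : ∀ᵐ s : ℝ, s ∈ Set.Ico (-A) (0:ℝ) → x s ≤ M)
    (hIDE : ∀ᵐ t : ℝ, 0 ≤ t → x t = ∫ a in (0:ℝ)..A, φ a * x (t - a)) :
    ∀ n : ℕ, ∀ᵐ s : ℝ, s ∈ Set.Ico (-A) ((n:ℝ)*h) →
      x s ≤ max (((L-c)/(1-c))^n * M) M := by
  -- basic facts
  set r : ℝ := (L-c)/(1-c) with hr
  have hh0 : 0 < h := by rw [hh]; exact lt_min hδ (by linarith)
  have hhδ : h ≤ δ := hh ▸ min_le_left _ _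
  have hhA : h ≤ A - δ := hh ▸ min_le_right _ _
  have hc0 : 0 ≤ c := by
    rw [hc]
    apply intervalIntegral.integral_nonneg hδ.le
    intro a ha
    exact hφ0 a ⟨ha.1, ha.2.trans hδA.le⟩
  have hφint1 : IntervalIntegrable φ volume 0 δ :=
    (hφc.mono (by rw [uIcc_of_le hδ.le]; exact Icc_subset_Icc le_rfl hδA.le)).intervalIntegrable
  have hφint2 : IntervalIntegrable φ volume δ A :=
    (hφc.mono (by rw [uIcc_of_le hδA.le]; exact Icc_subset_Icc hδ.le le_rfl)).intervalIntegrable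
  have hLc : ∫ a in δ..A, φ a = L - c := by
    have := intervalIntegral.integral_add_adjacent_intervals hφint1 hφint2
    rw [← hL, ← hc] at this
    linarith
  have hr1 : 1 ≤ r := by
    rw [hr]; rw [le_div_iff₀ (by linarith)]; linarith
  have hr0 : 0 ≤ r := by linarith
  -- max monotonicity fact
  have hKmono : ∀ n : ℕ, r * max (r^n * M) M ≤ max (r^(n+1) * M) M := by
    intro n
    have h1 : (1:ℝ) ≤ r^n := one_le_pow₀ hr1
    have h2 : (1:ℝ) ≤ r^(n+1) := one_le_pow₀ hr1
    have h3 : r^(n+1) = r * r^n := by ring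
    rcases le_total 0 M with hM0 | hM0
    · rw [max_eq_left (by nlinarith), max_eq_left (by nlinarith)]
      nlinarith
    · rw [max_eq_right (by nlinarith), max_eq_right (by nlinarith)]
      nlinarith
  intro n
  induction n with
  | zero =>
    filter_upwards [hM] with s hs hmem
    refine (hs ⟨hmem.1, ?_⟩).trans (le_max_right _ _)
    simpa using hmem.2
  | succ n ih =>
    set T : ℝ := ((n:ℝ)+1) * h with hT
    have hTcast : ((n+1 : ℕ) : ℝ) * h = T := by push_cast [hT]; ring
    have hT0 : 0 < T := by positivity
    have hTA : -A ≤ T := by linarith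
    set Kn : ℝ := max (r^n * M) M with hKn
    set S : ℝ := essSup x (volume.restrict (Ico (-A) T)) with hS
    have hxbdd : Bornology.IsBounded (x '' Ico (-A) T) :=
      (hloc T hTA).subset (image_mono Ico_subset_Icc_self)
    haveI : (ae ((volume : Measure ℝ).restrict (Ico (-A) T))).NeBot :=
      aeRestrictIcoNeBot (by linarith)
    have hbU := bddUnder_ae_of_image_bdd measurableSet_Ico hxbdd
    have hbL := bddUnder_ae_of_image_bdd' measurableSet_Ico hxbdd
    have hS1 : ∀ᵐ a ∂(volume.restrict (Ico (-A) T)), x a ≤ S := ae_le_essSup_real hbU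
    have hS1g : ∀ᵐ s : ℝ, s ∈ Ico (-A) T → x s ≤ S :=
      (ae_restrict_iff' measurableSet_Ico).1 hS1
    -- pointwise claim
    have claim : ∀ᵐ t : ℝ, t ∈ Ico (0:ℝ) T → x t ≤ c * S + (L - c) * Kn := by
      filter_upwards [hIDE] with t hIDEt htmem
      obtain ⟨ht0, htT⟩ := htmem
      -- integrability
      have hxb : Bornology.IsBounded (x '' Icc (-A) t) := hloc t (by linarith)
      obtain ⟨Cx, hCx⟩ := isBounded_iff_forall_norm_le.1 hxb
      obtain ⟨Cφ, hCφ⟩ := isBounded_iff_forall_norm_le.1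
        ((isCompact_Icc.image_of_continuousOn hφc).isBounded)
      have hf_meas : AEStronglyMeasurable (fun a => φ a * x (t - a))
          ((volume : Measure ℝ).restrict (Icc 0 A)) := by
        exact (hφc.aestronglyMeasurable measurableSet_Icc).mul
          ((hmeas.comp (measurable_const.sub measurable_id)).aestronglyMeasurable)
      have hf_int : IntegrableOn (fun a => φ a * x (t - a)) (Icc 0 A) volume := by
        refine Integrable.mono' (integrable_const (Cφ * Cx)) hf_meas ?_
        filter_upwards [ae_restrict_mem measurableSet_Icc] with a ha
        have h1 : ‖φ a‖ ≤ Cφ := hCφ _ ⟨a, ha, rfl⟩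
        have h2 : ‖x (t - a)‖ ≤ Cx := by
          refine hCx _ ⟨t - a, ⟨by linarith [ha.2], by linarith [ha.1]⟩, rfl⟩
        calc ‖φ a * x (t - a)‖ = ‖φ a‖ * ‖x (t - a)‖ := norm_mul _ _
          _ ≤ Cφ * Cx := by
              exact mul_le_mul h1 h2 (norm_nonneg _) ((norm_nonneg _).trans h1)
      have hint1 : IntervalIntegrable (fun a => φ a * x (t - a)) volume 0 δ := by
        rw [intervalIntegrable_iff]
        rw [uIoc_of_le hδ.le]
        exact hf_int.mono_set (Ioc_subset_Icc_self.trans (Icc_subset_Icc le_rfl hδA.le))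
      have hint2 : IntervalIntegrable (fun a => φ a * x (t - a)) volume δ A := by
        rw [intervalIntegrable_iff]
        rw [uIoc_of_le hδA.le]
        exact hf_int.mono_set (Ioc_subset_Icc_self.trans (Icc_subset_Icc hδ.le le_rfl))
      rw [hIDEt ht0, ← intervalIntegral.integral_add_adjacent_intervals hint1 hint2]
      -- first piece
      have hb1 : (∫ a in (0:ℝ)..δ, φ a * x (t - a)) ≤ c * S := by
        have hmono : ∀ᵐ a ∂(volume.restrict (Icc (0:ℝ) δ)),
            φ a * x (t - a) ≤ φ a * S := by
          filter_upwards [ae_restrict_mem measurableSet_Icc,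
            ae_restrict_of_ae (ae_comp_sub hS1g t)] with a ha hxa
          have hφa : 0 ≤ φ a := hφ0 a ⟨ha.1, ha.2.trans hδA.le⟩
          refine mul_le_mul_of_nonneg_left ?_ hφa
          exact hxa ⟨by linarith [ha.2], by linarith [ha.1]⟩
        have := intervalIntegral.integral_mono_ae_restrict hδ.le hint1
          (hφint1.mul_const S) hmono
        rw [intervalIntegral.integral_mul_const, ← hc] at this
        linarith
      -- second piece
      have hb2 : (∫ a in δ..A, φ a * x (t - a)) ≤ (L - c) * Kn := by
        have hmono : ∀ᵐ a ∂(volume.restrict (Icc δ A)),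
            φ a * x (t - a) ≤ φ a * Kn := by
          filter_upwards [ae_restrict_mem measurableSet_Icc,
            ae_restrict_of_ae (ae_comp_sub ih t)] with a ha hxa
          have hφa : 0 ≤ φ a := hφ0 a ⟨hδ.le.trans ha.1, ha.2⟩
          refine mul_le_mul_of_nonneg_left ?_ hφa
          refine hxa ⟨by linarith [ha.2], ?_⟩
          have : t - a ≤ t - δ := by linarith [ha.1]
          have hTδ : T - δ ≤ (n:ℝ) * h := by
            rw [hT]; nlinarith
          linarith
        have := intervalIntegral.integral_mono_ae_restrict hδA.le hint2
          (hφint2.mul_const Kn) hmono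
        rw [intervalIntegral.integral_mul_const, hLc] at this
        linarith
      linarith
    -- essSup self-bound
    have hSle : S ≤ max (c * S + (L - c) * Kn) M := by
      refine essSup_le_of_ae_real hbL.isCoboundedUnder_le ?_
      filter_upwards [ae_restrict_mem measurableSet_Ico,
        ae_restrict_of_ae claim, ae_restrict_of_ae hM] with s hs hcl hm
      rcases lt_or_ge s 0 with hs0 | hs0
      · exact (hm ⟨hs.1, hs0⟩).trans (le_max_right _ _)
      · exact (hcl ⟨hs0, hs.2⟩).trans (le_max_left _ _)
    have hSK : S ≤ max (r^(n+1) * M) M := by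
      rcases max_cases (c * S + (L - c) * Kn) M with ⟨heq, _⟩ | ⟨heq, hle⟩
      · rw [heq] at hSle
        have h1c : 0 < 1 - c := by linarith
        have hLc0 : 0 ≤ L - c := by linarith
        have hSr : S ≤ r * Kn := by
          rw [hr, div_mul_eq_mul_div, le_div_iff₀ h1c]
          nlinarith
        exact hSr.trans (hKmono n)
      · rw [heq] at hSle
        exact hSle.trans (le_max_right _ _)
    rw [hTcast]
    filter_upwards [hS1g] with s hsg hmem
    exact (hsg hmem).trans hSK


open MeasureTheory intervalIntegral

theorem stmt_8 (A δ : ℝ) (hA : 0 < A) (φ x ξ : ℝ → ℝ)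
    (hφc : ContinuousOn φ (Set.Icc 0 A)) (hφ0 : ∀ a ∈ Set.Icc 0 A, 0 ≤ φ a)
    (L c h : ℝ)
    (hL : L = ∫ a in (0:ℝ)..A, φ a) (hL1 : 1 ≤ L)
    (hδ : 0 < δ) (hδA : δ < A)
    (hc : c = ∫ a in (0:ℝ)..δ, φ a) (hc1 : c < 1)
    (hh : h = min δ (A - δ))
    (hmeas : Measurable x)
    (hloc : ∀ b : ℝ, -A ≤ b → Bornology.IsBounded (x '' Set.Icc (-A) b))
    (hξbdd : Bornology.IsBounded (ξ '' Set.Ico (-A) 0))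
    (hinit : ∀ a ∈ Set.Ico (-A) (0:ℝ), x a = ξ a)
    (hIDE : ∀ᵐ t : ℝ, 0 ≤ t → x t = ∫ a in (0:ℝ)..A, φ a * x (t - a)) :
    ∀ t ≥ 0,
      min (essInf (fun a => ξ a) (volume.restrict (Set.Ico (-A) (0:ℝ))))
          (((L - c) / (1 - c)) ^ (1 + ⌈t / h⌉₊) *
            essInf (fun a => ξ a) (volume.restrict (Set.Ico (-A) (0:ℝ)))) ≤
        essInf (fun a => x (t + a)) (volume.restrict (Set.Ico (-A) (0:ℝ))) ∧
      essInf (fun a => x (t + a)) (volume.restrict (Set.Ico (-A) (0:ℝ))) ≤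
        essSup (fun a => x (t + a)) (volume.restrict (Set.Ico (-A) (0:ℝ))) ∧
      essSup (fun a => x (t + a)) (volume.restrict (Set.Ico (-A) (0:ℝ))) ≤
        max (((L - c) / (1 - c)) ^ (1 + ⌈t / h⌉₊) *
              essSup (fun a => ξ a) (volume.restrict (Set.Ico (-A) (0:ℝ))))
            (essSup (fun a => ξ a) (volume.restrict (Set.Ico (-A) (0:ℝ)))) := by
  intro t ht
  have hh0 : 0 < h := by rw [hh]; exact lt_min hδ (by linarith)
  set μ0 := (volume : Measure ℝ).restrict (Set.Ico (-A) (0:ℝ)) with hμ0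
  haveI : (ae μ0).NeBot := aeRestrictIcoNeBot (by linarith)
  set r : ℝ := (L - c) / (1 - c) with hrdef
  set n : ℕ := 1 + ⌈t / h⌉₊ with hn
  set M : ℝ := essSup (fun a => ξ a) μ0 with hM
  set m : ℝ := essInf (fun a => ξ a) μ0 with hm
  have htn : t ≤ (n : ℝ) * h := by
    have h1 : t / h ≤ (⌈t / h⌉₊ : ℝ) := Nat.le_ceil _
    have h2 : t ≤ (⌈t / h⌉₊ : ℝ) * h := by
      rw [div_le_iff₀ hh0] at h1; linarith
    have h3 : ((n : ℕ) : ℝ) = 1 + (⌈t / h⌉₊ : ℝ) := by rw [hn]; push_cast; ring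
    nlinarith
  have ξbddU := bddUnder_ae_of_image_bdd (f := fun a => ξ a) measurableSet_Ico hξbdd
  have ξbddL := bddUnder_ae_of_image_bdd' (f := fun a => ξ a) measurableSet_Ico hξbdd
  have hMae : ∀ᵐ a ∂μ0, ξ a ≤ M := ae_le_essSup_real ξbddU
  have hmae : ∀ᵐ a ∂μ0, m ≤ ξ a := essInf_ae_le_real ξbddL
  have hMg : ∀ᵐ s : ℝ, s ∈ Set.Ico (-A) (0:ℝ) → x s ≤ M := by
    filter_upwards [(ae_restrict_iff' measurableSet_Ico).1 hMae] with s hs hmem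
    rw [hinit s hmem]; exact hs hmem
  have hmg : ∀ᵐ s : ℝ, s ∈ Set.Ico (-A) (0:ℝ) → (fun u => -x u) s ≤ -m := by
    filter_upwards [(ae_restrict_iff' measurableSet_Ico).1 hmae] with s hs hmem
    show -x s ≤ -m
    rw [hinit s hmem]
    exact neg_le_neg (hs hmem)
  have hIDEneg : ∀ᵐ u : ℝ, 0 ≤ u →
      (fun s => -x s) u = ∫ a in (0:ℝ)..A, φ a * (fun s => -x s) (u - a) := by
    filter_upwards [hIDE] with u hu h0
    show -x u = ∫ a in (0:ℝ)..A, φ a * -x (u - a)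
    have he : (fun a => φ a * -x (u - a)) = fun a => -(φ a * x (u - a)) :=
      funext fun a => mul_neg _ _
    rw [he, intervalIntegral.integral_neg, ← hu h0]
  have keyU := key_bound A δ hA φ x hφc hφ0 L c h hL hL1 hδ hδA hc hc1 hh hmeas hloc
    M hMg hIDE n
  have keyL := key_bound A δ hA φ (fun s => -x s) hφc hφ0 L c h hL hL1 hδ hδA hc hc1 hh
    hmeas.neg (fun b hb => bdd_neg_image (hloc b hb)) (-m) hmg hIDEneg n
  -- window boundedness
  have hwin : Bornology.IsBounded ((fun a => x (t + a)) '' Set.Ico (-A) 0) := by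
    rw [isBounded_iff_forall_norm_le]
    obtain ⟨C, hC⟩ := isBounded_iff_forall_norm_le.1 (hloc t (by linarith))
    refine ⟨C, ?_⟩
    rintro y ⟨a, ha, rfl⟩
    exact hC _ ⟨t + a, ⟨by linarith [ha.1], by linarith [ha.2]⟩, rfl⟩
  have hwU := bddUnder_ae_of_image_bdd (f := fun a => x (t + a)) measurableSet_Ico hwin
  have hwL := bddUnder_ae_of_image_bdd' (f := fun a => x (t + a)) measurableSet_Ico hwin
  have aeU : ∀ᵐ a ∂μ0, x (t + a) ≤ max (r^n * M) M := by
    filter_upwards [ae_restrict_mem measurableSet_Ico,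
      ae_restrict_of_ae (ae_comp_add keyU t)] with a ha hk
    exact hk ⟨by linarith [ha.1], by linarith [ha.2]⟩
  have aeL : ∀ᵐ a ∂μ0, min m (r^n * m) ≤ x (t + a) := by
    filter_upwards [ae_restrict_mem measurableSet_Ico,
      ae_restrict_of_ae (ae_comp_add keyL t)] with a ha hk
    have := hk ⟨by linarith [ha.1], by linarith [ha.2]⟩
    rcases le_total m (r^n * m) with hcmp | hcmp
    · rw [min_eq_left hcmp]
      have : -x (t + a) ≤ -m := this.trans (by
        rw [mul_neg]
        exact max_le (by linarith) le_rfl)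
      linarith
    · rw [min_eq_right hcmp]
      have : -x (t + a) ≤ -(r^n * m) := this.trans (by
        rw [mul_neg]
        exact max_le le_rfl (by linarith))
      linarith
  refine ⟨?_, ?_, ?_⟩
  · exact le_essInf_of_ae_real hwU.isCoboundedUnder_ge aeL
  · have e1 := essInf_ae_le_real hwL
    have e2 := ae_le_essSup_real hwU
    obtain ⟨a, ha1, ha2⟩ := (e1.and e2).exists
    exact ha1.trans ha2
  · exact essSup_le_of_ae_real hwL.isCoboundedUnder_le aeU
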